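/- Let U be a topological space, y₀ ∈ U, σ₀ ∈ ℂ, 0 < ρ < ε, let E be a complex Banach space, and let φ₁, …, φ_N : U × ℂ → E be functions such that: (i) for every y ∈ U and every i, the function φ_i(y,·) is a singular function with poles in closedBall(σ₀,ρ); (ii) each φ_i is continuous on U × A, where A = {σ ∈ ℂ : ρ < |σ − σ₀| < ε}. If the functions φ₁(y₀,·), …, φ_N(y₀,·) are linearly independent over ℂ, then there is a neighborhood U' of y₀ in U such that for every y ∈ U' the functions φ₁(y,·), …, φ_N(y,·) are linearly independent over ℂ. -/

import Mathlib

open Metric Set Complex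

noncomputable section

/-- A principal part at `c ∈ ℂ` with values in a complex vector space `E`:
`φ(σ) = ∑_{k=1}^m a_k (σ - c)^{-k}` (with the convention that the value at the pole is `0`,
coming from `0⁻¹ = 0` in Lean; for `σ ≠ c` this is exactly the usual formula). -/
def IsPrincipalPart {E : Type*} [AddCommGroup E] [Module ℂ E] (c : ℂ) (φ : ℂ → E) : Prop :=
  ∃ (m : ℕ) (a : ℕ → E), ∀ σ : ℂ, φ σ = ∑ k ∈ Finset.Icc 1 m, ((σ - c) ^ (-(k : ℤ))) • a k

/-- A singular function with poles in `S ⊆ ℂ`: a finite sum of principal parts at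
finitely many points of `S`. -/
def IsSingularFunction {E : Type*} [AddCommGroup E] [Module ℂ E] (S : Set ℂ) (φ : ℂ → E) :
    Prop :=
  ∃ (F : Finset ℂ) (p : ℂ → ℂ → E), (↑F : Set ℂ) ⊆ S ∧ (∀ c ∈ F, IsPrincipalPart c (p c)) ∧
    ∀ σ : ℂ, φ σ = ∑ c ∈ F, p c σ

/-- The space `𝒦` of singular functions `φ` with poles in `Ω` such that `σ ↦ P σ (φ σ)`
agrees, off a finite set (the poles of `φ`), with a function holomorphic on all of `Ω`. -/
def kernelSpace {𝒟 H : Type*} [NormedAddCommGroup 𝒟] [NormedSpace ℂ 𝒟]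
    [NormedAddCommGroup H] [NormedSpace ℂ H]
    (Ω : Set ℂ) (P : ℂ → (𝒟 →L[ℂ] H)) : Set (ℂ → 𝒟) :=
  {φ | IsSingularFunction Ω φ ∧ ∃ g : ℂ → H, DifferentiableOn ℂ g Ω ∧
    ∃ F : Set ℂ, F.Finite ∧ ∀ σ ∈ Ω \ F, P σ (φ σ) = g σ}

/-- The local kernel space `𝔎(𝔓, S)` of a holomorphic family of `n × n` matrices on `D`:
singular functions `φ : ℂ → ℂⁿ` with poles in `S` such that `σ ↦ 𝔓(σ) · φ(σ)` agrees,
off a finite set (the poles of `φ`), with a function holomorphic on all of `D`. -/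
def matKernelSpace {n : ℕ} (D : Set ℂ) (P : ℂ → Matrix (Fin n) (Fin n) ℂ) (S : Set ℂ) :
    Set (ℂ → (Fin n → ℂ)) :=
  {φ | IsSingularFunction S φ ∧ ∃ g : ℂ → (Fin n → ℂ),
    (∀ i, DifferentiableOn ℂ (fun σ => g σ i) D) ∧
    ∃ F : Set ℂ, F.Finite ∧ ∀ σ ∈ D \ F, (P σ).mulVec (φ σ) = g σ}

/-- A subset `K` of a complex vector space (in practice a linear subspace) has a basis of
cardinality `d`: there are `d` elements of `K` that are linearly independent and span `K`. -/
def HasBasisOfCard {E : Type*} [AddCommGroup E] [Module ℂ E] (K : Set E) (d : ℕ) : Prop :=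
  ∃ φ : Fin d → E, (∀ i, φ i ∈ K) ∧ LinearIndependent ℂ φ ∧
    ∀ ψ ∈ K, ψ ∈ Submodule.span ℂ (Set.range φ)

/-- A bounded operator is Fredholm of index `0`: finite-dimensional kernel, closed range,
finite-dimensional cokernel, and `dim ker = dim coker`. -/
def FredholmIndexZero {𝒟 H : Type*} [NormedAddCommGroup 𝒟] [NormedSpace ℂ 𝒟]
    [NormedAddCommGroup H] [NormedSpace ℂ H] (T : 𝒟 →L[ℂ] H) : Prop :=
  FiniteDimensional ℂ (LinearMap.ker (T : 𝒟 →ₗ[ℂ] H)) ∧ IsClosed (LinearMap.range (T : 𝒟 →ₗ[ℂ] H) : Set H) ∧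
    FiniteDimensional ℂ (H ⧸ LinearMap.range (T : 𝒟 →ₗ[ℂ] H)) ∧
    Module.finrank ℂ (LinearMap.ker (T : 𝒟 →ₗ[ℂ] H)) = Module.finrank ℂ (H ⧸ LinearMap.range (T : 𝒟 →ₗ[ℂ] H))


section Aux
open Filter Topology Finset

section Alg
variable {E : Type*} [AddCommGroup E] [Module ℂ E] {S : Set ℂ} {c : ℂ}


lemma isPrincipalPart_zero : IsPrincipalPart c (fun _ : ℂ => (0:E)) :=
  ⟨0, fun _ => 0, by simp⟩

lemma IsPrincipalPart.add {f g : ℂ → E} (hf : IsPrincipalPart c f) (hg : IsPrincipalPart c g) :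
    IsPrincipalPart c (fun σ => f σ + g σ) := by
  obtain ⟨m₁, a₁, h₁⟩ := hf
  obtain ⟨m₂, a₂, h₂⟩ := hg
  refine ⟨max m₁ m₂, fun k => (if k ≤ m₁ then a₁ k else 0) + (if k ≤ m₂ then a₂ k else 0),
    fun σ => ?_⟩
  have key : ∀ (m' : ℕ) (a : ℕ → E), m' ≤ max m₁ m₂ →
      ∑ k ∈ Finset.Icc 1 (max m₁ m₂), ((σ - c) ^ (-(k:ℤ))) • (if k ≤ m' then a k else 0)
        = ∑ k ∈ Finset.Icc 1 m', ((σ - c) ^ (-(k:ℤ))) • a k := by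
    intro m' a hm'
    rw [← Finset.sum_subset (Finset.Icc_subset_Icc_right hm')]
    · exact Finset.sum_congr rfl fun k hk => by
        rw [if_pos (Finset.mem_Icc.mp hk).2]
    · intro k hk hk2
      simp only [Finset.mem_Icc] at hk hk2
      rw [if_neg (by omega), smul_zero]
  simp only [smul_add, Finset.sum_add_distrib, key m₁ a₁ (le_max_left _ _),
    key m₂ a₂ (le_max_right _ _), h₁ σ, h₂ σ]

lemma IsPrincipalPart.csmul {f : ℂ → E} (r : ℂ) (hf : IsPrincipalPart c f) :
    IsPrincipalPart c (fun σ => r • f σ) := by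
  obtain ⟨m, a, h⟩ := hf
  exact ⟨m, fun k => r • a k, fun σ => by
    simp [h σ, Finset.smul_sum, smul_comm r]⟩

lemma isSingularFunction_zero : IsSingularFunction S (fun _ : ℂ => (0:E)) :=
  ⟨∅, fun _ _ => 0, by simp, by simp, by simp⟩

lemma IsSingularFunction.csmul {f : ℂ → E} (r : ℂ) (hf : IsSingularFunction S f) :
    IsSingularFunction S (fun σ => r • f σ) := by
  obtain ⟨F, p, hFS, hpp, hsum⟩ := hf
  exact ⟨F, fun c σ => r • p c σ, hFS, fun c hc => (hpp c hc).csmul r,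
    fun σ => by simp only []; rw [hsum σ, Finset.smul_sum]⟩

lemma IsSingularFunction.add {f g : ℂ → E} (hf : IsSingularFunction S f)
    (hg : IsSingularFunction S g) : IsSingularFunction S (fun σ => f σ + g σ) := by
  obtain ⟨F₁, p₁, hFS₁, hpp₁, hsum₁⟩ := hf
  obtain ⟨F₂, p₂, hFS₂, hpp₂, hsum₂⟩ := hg
  classical
  refine ⟨F₁ ∪ F₂, fun c σ => (if c ∈ F₁ then p₁ c σ else 0) + (if c ∈ F₂ then p₂ c σ else 0),
    ?_, ?_, ?_⟩
  · push_cast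
    exact union_subset hFS₁ hFS₂
  · intro c hc
    refine IsPrincipalPart.add ?_ ?_
    · by_cases h : c ∈ F₁
      · simp only [if_pos h]; exact hpp₁ c h
      · simp only [if_neg h]; exact isPrincipalPart_zero
    · by_cases h : c ∈ F₂
      · simp only [if_pos h]; exact hpp₂ c h
      · simp only [if_neg h]; exact isPrincipalPart_zero
  · intro σ
    simp only []
    rw [hsum₁ σ, hsum₂ σ, Finset.sum_add_distrib, Finset.sum_ite_mem, Finset.sum_ite_mem,
      Finset.union_inter_cancel_left, Finset.union_inter_cancel_right]

lemma isSingularFunction_sum {ι : Type*} (s : Finset ι) (f : ι → ℂ → E)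
    (h : ∀ i ∈ s, IsSingularFunction S (f i)) :
    IsSingularFunction S (fun σ => ∑ i ∈ s, f i σ) := by
  classical
  induction s using Finset.induction_on with
  | empty => simpa using (isSingularFunction_zero : IsSingularFunction S _)
  | insert x s' hx IH =>
    have := (h x (Finset.mem_insert_self x s')).add
      (IH (fun i hi => h i (Finset.mem_insert_of_mem hi)))
    simpa [Finset.sum_insert hx] using this

end Alg

section Anl
open Filter Topology
variable {E : Type*} [NormedAddCommGroup E] [NormedSpace ℂ E]

lemma lemA (c : ℂ) :
    ∀ (m : ℕ) (a : ℕ → E) (l : Filter ℂ), l.NeBot → l ≤ 𝓝[≠] c → ∀ b : E,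
    Filter.Tendsto (fun σ => ∑ k ∈ Finset.Icc 1 m, ((σ - c) ^ (-(k:ℤ))) • a k) l (𝓝 b) →
    ∀ k ∈ Finset.Icc 1 m, a k = 0 := by
  intro m
  induction m with
  | zero => intro a l _ _ b _ k hk; simp at hk
  | succ m IH =>
    intro a l hne hl b h
    have hzc : ∀ᶠ σ in l, σ ≠ c := hl (by exact self_mem_nhdsWithin)
    set g : ℂ → E := fun σ => ∑ k ∈ Finset.Icc 1 (m+1), ((σ - c) ^ ((m+1) - k : ℕ)) • a k with hg
    have hgc : g c = a (m+1) := by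
      show (∑ k ∈ Finset.Icc 1 (m+1), ((c - c) ^ ((m+1) - k : ℕ)) • a k) = a (m+1)
      rw [Finset.sum_eq_single (m+1)]
      · simp
      · intro k hk hkne
        have : 0 < m + 1 - k := by
          simp only [Finset.mem_Icc] at hk; omega
        simp only [sub_self]
        rw [zero_pow (by omega : m + 1 - k ≠ 0), zero_smul]
      · intro h; simp at h
    have hgcont : ContinuousAt g c := by
      exact (continuous_finset_sum _ fun k _ =>
        ((continuous_id.sub continuous_const).pow _).smul continuous_const).continuousAt
    have hgt : Filter.Tendsto g l (𝓝 (a (m+1))) := by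
      rw [← hgc]
      exact hgcont.tendsto.mono_left (hl.trans nhdsWithin_le_nhds)
    have heq : ∀ᶠ σ in l, ((σ - c) ^ (m+1)) • (fun σ => ∑ k ∈ Finset.Icc 1 (m+1),
        ((σ - c) ^ (-(k:ℤ))) • a k) σ = g σ := by
      filter_upwards [hzc] with σ hσ
      have hne0 : σ - c ≠ 0 := sub_ne_zero.mpr hσ
      simp only [Finset.smul_sum, smul_smul, hg]
      refine Finset.sum_congr rfl fun k hk => ?_
      simp only [Finset.mem_Icc] at hk
      congr 1
      rw [← zpow_natCast (σ - c) (m+1), ← zpow_add₀ hne0, ← zpow_natCast (σ - c) (m+1-k)]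
      congr 1
      omega
    have h1 : Filter.Tendsto (fun σ => ((σ - c) ^ (m+1)) • (∑ k ∈ Finset.Icc 1 (m+1),
        ((σ - c) ^ (-(k:ℤ))) • a k)) l (𝓝 ((0:ℂ) • b)) := by
      apply Filter.Tendsto.smul _ h
      have : Filter.Tendsto (fun σ : ℂ => (σ - c) ^ (m+1)) (𝓝 c) (𝓝 ((c - c)^(m+1))) :=
        (((continuous_id.sub continuous_const).pow _)).continuousAt
      simp only [sub_self, zero_pow (Nat.succ_ne_zero m)] at this
      exact this.mono_left (hl.trans nhdsWithin_le_nhds)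
    have htop : a (m+1) = 0 := by
      haveI := hne
      have := tendsto_nhds_unique (h1.congr' heq) hgt
      simpa using this.symm
    have hrest : ∀ k ∈ Finset.Icc 1 m, a k = 0 := by
      apply IH a l hne hl b
      apply h.congr
      intro σ
      rw [Finset.sum_Icc_succ_top (by omega : 1 ≤ m + 1)]
      simp [htop]
    intro k hk
    simp only [Finset.mem_Icc] at hk
    rcases Nat.lt_or_ge k (m+1) with h' | h'
    · exact hrest k (Finset.mem_Icc.mpr ⟨hk.1, by omega⟩)
    · have : k = m+1 := by omega
      rw [this]; exact htop


lemma singular_vanish [CompleteSpace E]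
    {σ₀ : ℂ} {ρ ε : ℝ} (hρ : 0 ≤ ρ) (hρε : ρ < ε) {φ : ℂ → E}
    (hφ : IsSingularFunction (closedBall σ₀ ρ) φ)
    (h0 : ∀ τ, ρ < dist τ σ₀ → dist τ σ₀ < ε → φ τ = 0) : ∀ σ, φ σ = 0 := by
  classical
  obtain ⟨F, p, hFS, hpp, hsum⟩ := hφ
  choose m a ha using hpp
  have hterm : ∀ (c : ℂ) (k : ℕ) (v : E) (σ : ℂ), σ ≠ c →
      DifferentiableAt ℂ (fun τ => ((τ - c) ^ (-(k:ℤ))) • v) σ := by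
    intro c k v σ hσ
    have h1 : DifferentiableAt ℂ (fun τ : ℂ => τ - c) σ := (differentiable_id.sub_const c) σ
    exact (h1.zpow (Or.inl (sub_ne_zero.mpr hσ))).smul_const v
  have hpdiff : ∀ c (hc : c ∈ F) (σ : ℂ), σ ≠ c → DifferentiableAt ℂ (p c) σ := by
    intro c hc σ hσ
    have hpc : p c = fun τ => ∑ k ∈ Finset.Icc 1 (m c hc), ((τ - c) ^ (-(k:ℤ))) • a c hc k :=
      funext (ha c hc)
    rw [hpc]
    exact DifferentiableAt.fun_sum fun k _ => hterm c k _ σ hσ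
  set U : Set ℂ := (↑F : Set ℂ)ᶜ with hU
  have hUopen : IsOpen U := F.finite_toSet.isClosed.isOpen_compl
  have hFsub : ∀ c ∈ F, c ∉ U := fun c hc h => h hc
  have hφdiff : DifferentiableOn ℂ φ U := by
    intro σ hσ
    have hφf : φ = fun τ => ∑ c ∈ F, p c τ := funext hsum
    rw [hφf]
    exact (DifferentiableAt.fun_sum fun c hc =>
      hpdiff c hc σ (fun h => hσ (by rw [h]; exact hc))).differentiableWithinAt
  have hanal : AnalyticOnNhd ℂ φ U := hφdiff.analyticOnNhd hUopen
  have hconn : IsPreconnected U :=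
    (F.finite_toSet.countable.isConnected_compl_of_one_lt_rank
      (by rw [rank_real_complex]; norm_num)).isPreconnected
  set r : ℝ := (ρ + ε) / 2 with hr
  have hρr : ρ < r := by rw [hr]; linarith
  have hrε : r < ε := by rw [hr]; linarith
  set z₁ : ℂ := σ₀ + (r : ℂ) with hz₁
  have hdist : dist z₁ σ₀ = r := by
    rw [hz₁, Complex.dist_eq, add_sub_cancel_left, Complex.norm_real, Real.norm_eq_abs,
      abs_of_pos (by linarith)]
  have hAopen : IsOpen {τ : ℂ | ρ < dist τ σ₀ ∧ dist τ σ₀ < ε} := by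
    have h1 : IsOpen {τ : ℂ | ρ < dist τ σ₀} :=
      isOpen_lt continuous_const (continuous_id.dist continuous_const)
    have h2 : IsOpen {τ : ℂ | dist τ σ₀ < ε} :=
      isOpen_lt (continuous_id.dist continuous_const) continuous_const
    exact h1.inter h2
  have hz₁A : z₁ ∈ {τ : ℂ | ρ < dist τ σ₀ ∧ dist τ σ₀ < ε} := ⟨hdist ▸ hρr, hdist ▸ hrε⟩
  have hz₁U : z₁ ∈ U := by
    intro h
    exact absurd (hFS h) (by simp [mem_closedBall, hdist]; linarith)
  have hev : φ =ᶠ[𝓝 z₁] 0 := by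
    filter_upwards [hAopen.mem_nhds hz₁A] with τ hτ
    exact h0 τ hτ.1 hτ.2
  have hzero : EqOn φ 0 U :=
    hanal.eqOn_zero_of_preconnected_of_eventuallyEq_zero hconn hz₁U hev
  have hpz : ∀ c₀ (hc₀ : c₀ ∈ F) (σ : ℂ), p c₀ σ = 0 := by
    intro c₀ hc₀
    set V : Set ℂ := (↑(F.erase c₀) : Set ℂ)ᶜ with hV
    have hVopen : IsOpen V := (F.erase c₀).finite_toSet.isClosed.isOpen_compl
    have hc₀V : c₀ ∈ V := by simp [hV]
    have hUeq : U = {c₀}ᶜ ∩ V := by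
      ext τ
      simp only [hU, hV, mem_compl_iff, Finset.mem_coe, mem_inter_iff, mem_singleton_iff,
        Finset.mem_erase]
      constructor
      · intro h; exact ⟨fun he => h (he ▸ hc₀), fun h2 => h h2.2⟩
      · intro h hF; exact h.2 ⟨h.1, hF⟩
    have hl : 𝓝[U] c₀ = 𝓝[≠] c₀ := by
      rw [hUeq]
      exact nhdsWithin_inter_of_mem' (mem_nhdsWithin_of_mem_nhds (hVopen.mem_nhds hc₀V))
    have hlneb : (𝓝[U] c₀).NeBot := by rw [hl]; infer_instance
    set rest : ℂ → E := fun τ => ∑ cc ∈ F.erase c₀, p cc τ with hrestdef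
    have hrestc : ContinuousAt rest c₀ := by
      refine DifferentiableAt.continuousAt (𝕜 := ℂ) (DifferentiableAt.fun_sum fun cc hcc => ?_)
      exact hpdiff cc (Finset.mem_of_mem_erase hcc) c₀
        (fun h => (Finset.mem_erase.mp hcc).1 (by rw [h]))
    have hrest : Tendsto rest (𝓝[U] c₀) (𝓝 (rest c₀)) :=
      hrestc.tendsto.mono_left nhdsWithin_le_nhds
    have hev2 : ∀ᶠ τ in 𝓝[U] c₀, (0:E) - rest τ = p c₀ τ := by
      filter_upwards [self_mem_nhdsWithin] with τ hτ
      have h1 : φ τ = p c₀ τ + rest τ := by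
        rw [hsum τ, hrestdef, ← Finset.add_sum_erase F _ hc₀]
      have h2 : φ τ = 0 := hzero hτ
      rw [h2] at h1
      have h3 : p c₀ τ = -rest τ := eq_neg_of_add_eq_zero_left h1.symm
      rw [zero_sub, h3]
    have htend : Tendsto (p c₀) (𝓝[U] c₀) (𝓝 ((0:E) - rest c₀)) :=
      (tendsto_const_nhds.sub hrest).congr' hev2
    have htend2 : Tendsto (fun σ => ∑ k ∈ Finset.Icc 1 (m c₀ hc₀),
        ((σ - c₀) ^ (-(k:ℤ))) • a c₀ hc₀ k) (𝓝[U] c₀) (𝓝 ((0:E) - rest c₀)) := by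
      refine htend.congr fun σ => ha c₀ hc₀ σ
    have hak := lemA c₀ (m c₀ hc₀) (a c₀ hc₀) (𝓝[U] c₀) hlneb (le_of_eq hl) _ htend2
    intro σ
    rw [ha c₀ hc₀ σ]
    exact Finset.sum_eq_zero fun k hk => by rw [hak k hk, smul_zero]
  intro σ
  rw [hsum σ]
  exact Finset.sum_eq_zero fun c hc => hpz c hc σ

end Anl

lemma pick_dual {V : Type*} [AddCommGroup V] [Module ℂ V] [FiniteDimensional ℂ V]
    (T : Set (V →ₗ[ℂ] ℂ)) (t₀ : V →ₗ[ℂ] ℂ) (ht₀ : t₀ ∈ T)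
    (hsep : ∀ v : V, v ≠ 0 → ∃ f ∈ T, f v ≠ 0) :
    ∀ (n : ℕ) (W : Submodule ℂ V), Module.finrank ℂ W ≤ n →
      ∃ g : Fin n → (V →ₗ[ℂ] ℂ), (∀ j, g j ∈ T) ∧ ∀ v ∈ W, (∀ j, g j v = 0) → v = 0 := by
  intro n
  induction n with
  | zero =>
    intro W hW
    have hWbot : W = ⊥ := Submodule.finrank_eq_zero.mp (Nat.le_zero.mp hW)
    exact ⟨fun j => j.elim0, fun j => j.elim0,
      fun v hv _ => by simpa [hWbot] using hv⟩
  | succ n IH =>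
    intro W hW
    by_cases hWbot : W = ⊥
    · exact ⟨fun _ => t₀, fun _ => ht₀, fun v hv _ => by simpa [hWbot] using hv⟩
    · obtain ⟨v₀, hv₀W, hv₀⟩ := Submodule.exists_mem_ne_zero_of_ne_bot hWbot
      obtain ⟨f, hfT, hfv⟩ := hsep v₀ hv₀
      set W' : Submodule ℂ V := W ⊓ LinearMap.ker f with hW'
      have hlt : W' < W := by
        refine lt_of_le_of_ne inf_le_left fun h => ?_
        have : v₀ ∈ W' := h ▸ hv₀W
        exact hfv (LinearMap.mem_ker.mp this.2)
      have hrk : Module.finrank ℂ W' ≤ n := by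
        have := Submodule.finrank_lt_finrank_of_lt hlt
        omega
      obtain ⟨g, hgT, hg⟩ := IH W' hrk
      refine ⟨Fin.cons f g, ?_, ?_⟩
      · intro j
        refine Fin.cases ?_ ?_ j
        · simpa using hfT
        · intro i; simpa using hgT i
      · intro v hv hall
        have h0 : f v = 0 := by simpa using hall 0
        refine hg v ⟨hv, LinearMap.mem_ker.mpr h0⟩ fun j => ?_
        simpa using hall j.succ


end Aux

/-- a family of singular functions with poles in a fixed compact disc, continuous
on an annulus around it and linearly independent at `y₀`, stays linearly independent nearby. -/
theorem statement9 {X : Type*} [TopologicalSpace X] (y₀ : X) (σ₀ : ℂ) (ρ ε : ℝ)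
    (hρ : 0 < ρ) (hρε : ρ < ε)
    {E : Type*} [NormedAddCommGroup E] [NormedSpace ℂ E] [CompleteSpace E]
    (N : ℕ) (φ : Fin N → X → ℂ → E)
    (hsing : ∀ y : X, ∀ i, IsSingularFunction (closedBall σ₀ ρ) (φ i y))
    (hcont : ∀ i, ContinuousOn (fun p : X × ℂ => φ i p.1 p.2)
      ((univ : Set X) ×ˢ {σ : ℂ | ρ < dist σ σ₀ ∧ dist σ σ₀ < ε}))
    (hli : LinearIndependent ℂ (fun i => φ i y₀)) :
    ∃ U' ∈ nhds y₀, ∀ y ∈ U', LinearIndependent ℂ (fun i => φ i y) := by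
  classical
  rcases Nat.eq_zero_or_pos N with hN | hN
  · subst hN
    exact ⟨univ, Filter.univ_mem, fun y _ => linearIndependent_empty_type⟩
  set A : Set ℂ := {σ : ℂ | ρ < dist σ σ₀ ∧ dist σ σ₀ < ε} with hA
  have hAopen : IsOpen A := by
    have h1 : IsOpen {τ : ℂ | ρ < dist τ σ₀} :=
      isOpen_lt continuous_const (continuous_id.dist continuous_const)
    have h2 : IsOpen {τ : ℂ | dist τ σ₀ < ε} :=
      isOpen_lt (continuous_id.dist continuous_const) continuous_const
    exact h1.inter h2
  have hsep0 : ∀ c : Fin N → ℂ, c ≠ 0 →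
      ∃ s ∈ A, ∃ ℓ : E →L[ℂ] ℂ, ℓ (∑ i, c i • φ i y₀ s) ≠ 0 := by
    intro c hc
    set g : ℂ → E := fun σ => ∑ i, c i • φ i y₀ σ with hg
    have hgsing : IsSingularFunction (closedBall σ₀ ρ) g :=
      isSingularFunction_sum Finset.univ (fun i σ => c i • φ i y₀ σ)
        (fun i _ => (hsing y₀ i).csmul (c i))
    have hgne : ∃ s, s ∈ A ∧ g s ≠ 0 := by
      by_contra h
      push_neg at h
      have hzero : ∀ σ, g σ = 0 :=
        singular_vanish hρ.le hρε hgsing (fun τ h1 h2 => h τ ⟨h1, h2⟩)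
      have hsum0 : ∑ i, c i • (fun i => φ i y₀) i = 0 := by
        funext σ
        have := hzero σ
        simpa [hg, Finset.sum_apply, Pi.smul_apply] using this
      have := Fintype.linearIndependent_iff.mp hli c hsum0
      exact hc (funext fun i => this i)
    obtain ⟨s, hsA, hgs⟩ := hgne
    obtain ⟨ℓ, _, hℓ⟩ := exists_dual_vector ℂ (g s) (norm_ne_zero_iff.mpr hgs)
    refine ⟨s, hsA, ℓ, ?_⟩
    rw [show (∑ i, c i • φ i y₀ s) = g s from rfl, hℓ]
    exact Complex.ofReal_ne_zero.mpr (norm_ne_zero_iff.mpr hgs)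
  have mkmap : ∀ (s : ℂ) (ℓ : E →L[ℂ] ℂ), ∃ f : (Fin N → ℂ) →ₗ[ℂ] ℂ,
      ∀ c : Fin N → ℂ, f c = ℓ (∑ i, c i • φ i y₀ s) := by
    intro s ℓ
    refine ⟨{ toFun := fun c => ℓ (∑ i, c i • φ i y₀ s)
              map_add' := ?_, map_smul' := ?_ }, fun c => rfl⟩
    · intro c d
      simp only [Pi.add_apply, add_smul, Finset.sum_add_distrib, map_add]
    · intro r c
      simp only [RingHom.id_apply, Pi.smul_apply, smul_eq_mul, mul_smul, ← Finset.smul_sum,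
        map_smul]
  set T : Set ((Fin N → ℂ) →ₗ[ℂ] ℂ) :=
    {f | ∃ s ∈ A, ∃ ℓ : E →L[ℂ] ℂ, ∀ c : Fin N → ℂ, f c = ℓ (∑ i, c i • φ i y₀ s)} with hT
  have hTsep : ∀ c : Fin N → ℂ, c ≠ 0 → ∃ f ∈ T, f c ≠ 0 := by
    intro c hc
    obtain ⟨s, hsA, ℓ, h⟩ := hsep0 c hc
    obtain ⟨f, hf⟩ := mkmap s ℓ
    exact ⟨f, ⟨s, hsA, ℓ, hf⟩, by rw [hf c]; exact h⟩
  have hT0 : ∃ t₀, t₀ ∈ T := by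
    have h1 : (fun _ => (1:ℂ) : Fin N → ℂ) ≠ 0 := by
      intro h
      have := congrFun h ⟨0, hN⟩
      simpa using this
    obtain ⟨f, hfT, _⟩ := hTsep _ h1
    exact ⟨f, hfT⟩
  obtain ⟨t₀, ht₀⟩ := hT0
  obtain ⟨g, hgT, hginj⟩ := pick_dual T t₀ ht₀ hTsep N ⊤
    (le_of_eq (by simp [finrank_top]))
  choose s hsA ℓ hℓ using hgT
  set M : X → Matrix (Fin N) (Fin N) ℂ :=
    fun y => Matrix.of fun j i => ℓ j (φ i y (s j)) with hM
  have hMg : ∀ y (c : Fin N → ℂ) j, (M y).mulVec c j = ℓ j (∑ i, c i • φ i y (s j)) := by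
    intro y c j
    simp [hM, Matrix.mulVec, dotProduct, map_sum, map_smul, smul_eq_mul, mul_comm]
  have hdet0 : (M y₀).det ≠ 0 := by
    intro hdet
    obtain ⟨c, hc0, hcv⟩ := Matrix.exists_mulVec_eq_zero_iff.mpr hdet
    apply hc0
    refine hginj c trivial fun j => ?_
    rw [hℓ j c, ← hMg y₀ c j, hcv]
    rfl
  have hMcont : ContinuousAt (fun y => (M y).det) y₀ := by
    have hMc : ContinuousAt M y₀ := by
      refine continuousAt_pi.mpr fun j => continuousAt_pi.mpr fun i => ?_
      have h1 : ContinuousAt (fun p : X × ℂ => φ i p.1 p.2) (y₀, s j) :=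
        (hcont i).continuousAt ((isOpen_univ.prod hAopen).mem_nhds ⟨trivial, hsA j⟩)
      have h2 : ContinuousAt (fun y : X => (y, s j)) y₀ :=
        (continuous_id.prodMk continuous_const).continuousAt
      have h3 : ContinuousAt (fun y : X => φ i y (s j)) y₀ :=
        ContinuousAt.comp (f := fun y : X => (y, s j)) (x := y₀) h1 h2
      exact ((ℓ j).continuous.continuousAt).comp h3
    exact ((Continuous.matrix_det continuous_id).continuousAt).comp hMc
  have hevent : ∀ᶠ y in nhds y₀, (M y).det ≠ 0 := hMcont.eventually_ne hdet0
  refine ⟨{y | (M y).det ≠ 0}, hevent, ?_⟩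
  intro y hy
  rw [Fintype.linearIndependent_iff]
  intro c hc
  have hvec : (M y).mulVec c = 0 := by
    funext j
    rw [hMg y c j]
    have h1 := congrFun hc (s j)
    have h2 : (∑ i, c i • φ i y (s j)) = 0 := by
      simpa [Finset.sum_apply, Pi.smul_apply] using h1
    rw [h2, map_zero]
    rfl
  have hc0 : c = 0 := by
    by_contra hc0
    exact hy (Matrix.exists_mulVec_eq_zero_iff.mp ⟨c, hc0, hvec⟩)
  intro i
  rw [hc0]
  rfl
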